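/- For any vector x ∈ F_q^n, the pair weight satisfies w_H(x) + 1 ≤ w_p(x) ≤ 2·w_H(x) whenever 0 < w_H(x) < n, where w_H is the Hamming weight. -/

import Mathlib

/-- Hamming weight of a vector. -/
noncomputable def hammingWt {F : Type*} [Field F] {n : ℕ} (x : Fin n → F) : ℕ :=
  Set.ncard {i : Fin n | x i ≠ 0}

/-- Pair weight of a vector (indices mod `n`). -/
noncomputable def pairWeight {F : Type*} [Field F] {n : ℕ} [NeZero n] (x : Fin n → F) : ℕ :=
  Set.ncard {i : Fin n | x i ≠ 0 ∨ x (i + 1) ≠ 0}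

open Fin.NatCast Fin.CommRing

theorem hamming_add_one_le_pair_le_two_hamming {F : Type*} [Field F] [Fintype F]
    {n : ℕ} [NeZero n] (x : Fin n → F) (h1 : 0 < hammingWt x) (h2 : hammingWt x < n) :
    hammingWt x + 1 ≤ pairWeight x ∧ pairWeight x ≤ 2 * hammingWt x := by
  classical
  set S : Set (Fin n) := {i : Fin n | x i ≠ 0} with hSdef
  set T : Set (Fin n) := {i : Fin n | x i ≠ 0 ∨ x (i + 1) ≠ 0} with hTdef
  have hfinS : S.Finite := Set.toFinite _
  have hfinT : T.Finite := Set.toFinite _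
  have hST : S ⊆ T := fun i hi => Or.inl hi
  constructor
  · -- lower bound
    obtain ⟨j, hj⟩ : ∃ j : Fin n, x j = 0 := by
      by_contra h
      push_neg at h
      have : S = Set.univ := Set.eq_univ_of_forall h
      rw [hammingWt, ← hSdef, this, Set.ncard_univ, Nat.card_eq_fintype_card,
        Fintype.card_fin] at h2
      exact lt_irrefl _ h2
    obtain ⟨k, hk⟩ : ∃ k : Fin n, x k ≠ 0 := by
      have : S.Nonempty := Set.nonempty_of_ncard_ne_zero (by
        rw [hammingWt, ← hSdef] at h1; omega)
      exact this
    have hex : ∃ m : ℕ, x (j + (m : Fin n)) ≠ 0 := by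
      refine ⟨(k - j).val, ?_⟩
      have : ((↑(k - j).val : Fin n)) = k - j := Fin.cast_val_eq_self _
      rw [this]
      have : j + (k - j) = k := by ring
      rw [this]; exact hk
    set m := Nat.find hex with hm
    have hspec : x (j + (m : Fin n)) ≠ 0 := Nat.find_spec hex
    have hm1 : 1 ≤ m := by
      rcases Nat.eq_zero_or_pos m with h0 | h0
      · exfalso; apply hspec; rw [h0]; simpa using hj
      · exact h0
    set i₀ : Fin n := j + ((m - 1 : ℕ) : Fin n) with hi₀
    have hi₀notS : i₀ ∉ S := by
      intro hmem
      have := Nat.find_min hex (m := m - 1) (by omega)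
      exact this hmem
    have hi₀succ : i₀ + 1 = j + (m : Fin n) := by
      rw [hi₀, add_assoc]
      congr 1
      have : ((m - 1 : ℕ) : Fin n) + 1 = ((m - 1 + 1 : ℕ) : Fin n) := by push_cast; ring
      rw [this, Nat.sub_add_cancel hm1]
    have hsub : insert i₀ S ⊆ T := by
      intro i hi
      rcases hi with rfl | hi
      · exact Or.inr (by rw [hi₀succ]; exact hspec)
      · exact hST hi
    have := Set.ncard_le_ncard hsub hfinT
    rw [Set.ncard_insert_of_notMem hi₀notS hfinS] at this
    rw [hammingWt, pairWeight, ← hSdef, ← hTdef]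
    omega
  · -- upper bound
    have hTeq : T = S ∪ {i : Fin n | x (i + 1) ≠ 0} := rfl
    have himg : {i : Fin n | x (i + 1) ≠ 0} = (fun a : Fin n => a - 1) '' S := by
      ext i
      constructor
      · intro hi
        exact ⟨i + 1, hi, by ring⟩
      · rintro ⟨a, ha, rfl⟩
        simpa [hSdef] using ha
    have hinj : Function.Injective (fun a : Fin n => a - 1) := by
      intro a b h
      simpa using congrArg (· + (1 : Fin n)) h
    have hcard : {i : Fin n | x (i + 1) ≠ 0}.ncard = S.ncard := by
      rw [himg, Set.ncard_image_of_injective _ hinj]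
    have := Set.ncard_union_le S {i : Fin n | x (i + 1) ≠ 0}
    rw [hammingWt, pairWeight, ← hSdef, ← hTdef, hTeq]
    omega
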